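/- arXiv:1303.5172 — 6 statements merged into one kernel-verified Lean document; each statement's English description precedes it below -/
import Mathlib

section
/- The maximum privacy discrepancy satisfies α = max_{1≤i,j≤m} α_{ij} = max_{1≤j≤m} π_j(1−π_j)/(π_j + (1-p)/(mp)). -/
/-- The maximum privacy discrepancy satisfies
`α = max_{i,j} α_{ij} = max_j π_j (1-π_j) / (π_j + (1-p)/(m p))`. -/
theorem alpha_max_formula
    (m : ℕ) (hm : 2 ≤ m) (p : ℝ) (hp : 0 < p) (hp1 : p < 1)
    (π : Fin m → ℝ) (hπ : ∀ i, 0 ≤ π i) (hsum : ∑ i, π i = 1)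
    (r α : Fin m → Fin m → ℝ)
    (hr : ∀ i j, r i j = ((p * (if i = j then (1 : ℝ) else 0) + (1 - p) / m) * π i)
        / (p * π j + (1 - p) / m))
    (hα : ∀ i j, α i j = |r i j - π i|)
    (h1 : (Finset.univ : Finset (Fin m × Fin m)).Nonempty)
    (h2 : (Finset.univ : Finset (Fin m)).Nonempty) :
    Finset.univ.sup' h1 (fun q => α q.1 q.2)
      = Finset.univ.sup' h2 (fun j => π j * (1 - π j) / (π j + (1 - p) / (m * p))) := by
  have hm0 : (0:ℝ) < (m:ℝ) := by
    have : (2:ℝ) ≤ (m:ℝ) := by exact_mod_cast hm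
    linarith
  have hc : 0 < (1 - p) / (m:ℝ) := div_pos (by linarith) hm0
  have hd : ∀ j, 0 < p * π j + (1 - p) / m := fun j =>
    add_pos_of_nonneg_of_pos (mul_nonneg hp.le (hπ j)) hc
  have hπ1 : ∀ j, π j ≤ 1 := by
    intro j
    rw [← hsum]
    exact Finset.single_le_sum (fun i _ => hπ i) (Finset.mem_univ j)
  have hpair : ∀ i j, i ≠ j → π i + π j ≤ 1 := by
    intro i j hij
    have h := Finset.sum_le_sum_of_subset_of_nonneg (Finset.subset_univ ({i, j} : Finset (Fin m)))
      (fun k _ _ => hπ k)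
    rw [Finset.sum_pair hij, hsum] at h
    exact h
  have hαval : ∀ i j, α i j
      = p * π i * |(if i = j then (1:ℝ) else 0) - π j| / (p * π j + (1 - p) / m) := by
    intro i j
    rw [hα, hr]
    have heq : ((p * (if i = j then (1:ℝ) else 0) + (1 - p) / m) * π i)
        / (p * π j + (1 - p) / m) - π i
        = p * π i * ((if i = j then (1:ℝ) else 0) - π j) / (p * π j + (1 - p) / m) := by
      rw [eq_div_iff (hd j).ne', sub_mul, div_mul_cancel₀ _ (hd j).ne']
      split_ifs <;> ring
    rw [heq, abs_div, abs_of_pos (hd j), abs_mul, abs_mul, abs_of_pos hp, abs_of_nonneg (hπ i)]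
  have key : ∀ j, π j * (1 - π j) / (π j + (1 - p) / ((m:ℝ) * p))
      = p * π j * (1 - π j) / (p * π j + (1 - p) / m) := by
    intro j
    have h1' : π j + (1 - p) / ((m:ℝ) * p) = (p * π j + (1 - p) / m) / p := by
      field_simp
    rw [h1', div_div_eq_mul_div]
    ring
  apply le_antisymm
  · apply Finset.sup'_le
    rintro ⟨i, j⟩ -
    refine le_trans ?_ (Finset.le_sup' _ (Finset.mem_univ j))
    rw [key j, hαval]
    by_cases hij : i = j
    · subst hij
      rw [if_pos rfl, abs_of_nonneg (by linarith [hπ1 i])]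
    · rw [if_neg hij, zero_sub, abs_neg, abs_of_nonneg (hπ j)]
      have hn : p * π i * π j ≤ p * π j * (1 - π j) := by
        nlinarith [mul_nonneg (mul_nonneg hp.le (hπ j))
          (by linarith [hpair i j hij] : (0:ℝ) ≤ 1 - π j - π i)]
      exact (div_le_div_iff_of_pos_right (hd j)).mpr hn
  · apply Finset.sup'_le
    intro j _
    refine le_trans ?_ (Finset.le_sup' (fun q => α q.1 q.2) (Finset.mem_univ (j, j)))
    rw [key j, hαval]
    rw [if_pos rfl]
    rw [abs_of_nonneg (by linarith [hπ1 j] : (0:ℝ) ≤ 1 - π j)]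
end

section
/- (Theorem 1, sufficiency) If p ≤ p_0 = 1/(1 + (m/ξ)·((1-ξ)/2)²), then for all probability vectors (π_1,...,π_m), π_j(1−π_j) − ξπ_j ≤ ξ(1-p)/(mp) holds for all 1 ≤ j ≤ m. -/
/-- Theorem 1 (sufficiency): if `p ≤ p₀ = 1/(1 + (m/ξ)((1-ξ)/2)²)` then for all
probability vectors `π`, `π_j(1-π_j) - ξ π_j ≤ ξ(1-p)/(m p)` for all `j`. -/
theorem privacy_bound_of_p_le_p0
    (m : ℕ) (hm : 2 ≤ m) (ξ p : ℝ) (hξ : 0 < ξ) (hξ1 : ξ < 1)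
    (hp : 0 < p) (hp1 : p < 1)
    (hpp0 : p ≤ 1 / (1 + ((m : ℝ) / ξ) * ((1 - ξ) / 2) ^ 2)) :
    ∀ π : Fin m → ℝ, (∀ i, 0 ≤ π i) → ∑ i, π i = 1 →
      ∀ j, π j * (1 - π j) - ξ * π j ≤ ξ * (1 - p) / (m * p) := by
  intro π hπ hsum j
  have hm0 : (0:ℝ) < m := by
    have : (2:ℝ) ≤ m := by exact_mod_cast hm
    linarith
  have hX : (0:ℝ) < 1 + ((m : ℝ) / ξ) * ((1 - ξ) / 2) ^ 2 := by positivity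
  have hmul : p * (1 + ((m : ℝ) / ξ) * ((1 - ξ) / 2) ^ 2) ≤ 1 := by
    rw [le_div_iff₀ hX] at hpp0; linarith
  have h1 : π j * (1 - π j) - ξ * π j ≤ ((1 - ξ) / 2) ^ 2 := by
    nlinarith [sq_nonneg (π j - (1 - ξ) / 2)]
  have h2 : ((1 - ξ) / 2) ^ 2 ≤ ξ * (1 - p) / (m * p) := by
    rw [le_div_iff₀ (by positivity)]
    have hdiv : ((m:ℝ)/ξ) * ((1-ξ)/2)^2 * ξ = m * ((1-ξ)/2)^2 := by
      field_simp
    have key := mul_le_mul_of_nonneg_right hmul hξ.le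
    nlinarith [key, hdiv, hp.le]
  linarith
end

section
/- (Theorem 1, necessity) If 0 < p < 1 and for all probability vectors (π_1,...,π_m) the inequality π_j(1−π_j) − ξπ_j ≤ ξ(1-p)/(mp) holds for all j, then p ≤ p_0 = 1/(1 + (m/ξ)·((1-ξ)/2)²). -/
/-- Theorem 1 (necessity): if for all probability vectors `π` the inequality
`π_j(1-π_j) - ξ π_j ≤ ξ(1-p)/(m p)` holds for all `j`, then
`p ≤ p₀ = 1/(1 + (m/ξ)((1-ξ)/2)²)`. -/
theorem p_le_p0_of_privacy_bound
    (m : ℕ) (hm : 2 ≤ m) (ξ p : ℝ) (hξ : 0 < ξ) (hξ1 : ξ < 1)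
    (hp : 0 < p) (hp1 : p < 1)
    (hpriv : ∀ π : Fin m → ℝ, (∀ i, 0 ≤ π i) → ∑ i, π i = 1 →
      ∀ j, π j * (1 - π j) - ξ * π j ≤ ξ * (1 - p) / (m * p)) :
    p ≤ 1 / (1 + ((m : ℝ) / ξ) * ((1 - ξ) / 2) ^ 2) := by
  have h0 : (0 : ℕ) < m := by omega
  set i0 : Fin m := ⟨0, by omega⟩
  set i1 : Fin m := ⟨1, by omega⟩
  have hne : i0 ≠ i1 := by simp [i0, i1, Fin.ext_iff]
  set a : ℝ := (1 - ξ) / 2 with ha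
  set b : ℝ := (1 + ξ) / 2 with hb
  set π : Fin m → ℝ := fun i => (if i = i0 then a else 0) + (if i = i1 then b else 0) with hπ
  have hnn : ∀ i, 0 ≤ π i := by
    intro i
    have ha0 : 0 ≤ a := by simp [ha]; linarith
    have hb0 : 0 ≤ b := by simp [hb]; linarith
    simp only [hπ]
    positivity
  have hsum : ∑ i, π i = 1 := by
    simp only [hπ, Finset.sum_add_distrib, Finset.sum_ite_eq', Finset.mem_univ, if_true]
    simp [ha, hb]; ring
  have hkey := hpriv π hnn hsum i0
  have hπ0 : π i0 = a := by simp [hπ, hne]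
  rw [hπ0] at hkey
  have hA : a * (1 - a) - ξ * a = a ^ 2 := by simp [ha]; ring
  rw [hA] at hkey
  -- hkey : a^2 ≤ ξ*(1-p)/(m*p)
  have hm0 : (0 : ℝ) < m := by exact_mod_cast h0
  have hden : (0 : ℝ) < 1 + ((m : ℝ) / ξ) * a ^ 2 := by positivity
  rw [le_div_iff₀ hden]
  have h1 : a ^ 2 * (m * p) ≤ ξ * (1 - p) := by
    rw [le_div_iff₀ (by positivity)] at hkey
    linarith
  have hfac : p * (1 + (m : ℝ) / ξ * a ^ 2) = p + p * ((m : ℝ) * a ^ 2) / ξ := by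
    field_simp
  rw [hfac]
  have h2 : p * ((m : ℝ) * a ^ 2) / ξ ≤ 1 - p := by
    rw [div_le_iff₀ hξ]
    nlinarith [h1]
  linarith
end

section
/- (Theorem 2, sufficiency) Suppose 0 < ξ < c < 1 and p ≤ p_0 = ((c−ξ)/m)/((c−ξ)/m + ξ(1−c)). Then for every probability vector (π_1,...,π_m) with π_1 ≥ c, the revealing probability P(X = x_1 | R = x_j) = (pδ_{1j} + (1-p)/m)π_1/(pπ_j + (1-p)/m) is at least ξ for every 1 ≤ j ≤ m. -/
/-- Theorem 2 (sufficiency): if `0 < ξ < c < 1` and `p ≤ p₀ = ((c-ξ)/m)/((c-ξ)/m + ξ(1-c))`,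
then for every probability vector `π` with `π 0 ≥ c`, the revealing probability
`(p δ_{0j} + (1-p)/m) π 0 / (p π_j + (1-p)/m)` is at least `ξ` for every `j`. -/
theorem revealing_ge_xi_of_p_le_p0
    (m : ℕ) (hm : 2 ≤ m) [NeZero m] (ξ c p : ℝ)
    (hξ : 0 < ξ) (hξc : ξ < c) (hc : c < 1)
    (hp : 0 < p) (hp1 : p < 1)
    (hpp0 : p ≤ ((c - ξ) / m) / ((c - ξ) / m + ξ * (1 - c))) :
    ∀ π : Fin m → ℝ, (∀ i, 0 ≤ π i) → ∑ i, π i = 1 → c ≤ π 0 →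
      ∀ j : Fin m,
        ξ ≤ (p * (if (0 : Fin m) = j then (1 : ℝ) else 0) + (1 - p) / m) * π 0
              / (p * π j + (1 - p) / m) := by
  intro π hπ0 hπsum hπc j
  have hmpos : (0:ℝ) < m := by positivity
  have hqpos : (0:ℝ) < (1 - p) / m := by
    have : (0:ℝ) < 1 - p := by linarith
    positivity
  have hden : (0:ℝ) < p * π j + (1 - p) / m := by
    have := hπ0 j
    nlinarith
  rw [le_div_iff₀ hden]
  have hπ0le1 : π 0 ≤ 1 := by
    rw [← hπsum]
    exact Finset.single_le_sum (fun i _ => hπ0 i) (Finset.mem_univ 0)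
  by_cases h0j : (0 : Fin m) = j
  · subst h0j
    simp only [if_pos rfl, if_true, mul_one]
    have h1 : ξ < π 0 := lt_of_lt_of_le hξc hπc
    nlinarith [mul_nonneg (mul_nonneg hp.le (hπ0 0)) (by linarith : (0:ℝ) ≤ 1 - ξ),
      mul_pos hqpos (by linarith : (0:ℝ) < π 0 - ξ)]
  · simp only [if_neg h0j, mul_zero, add_zero]
    -- π j ≤ 1 - π 0
    have hsum2 : π 0 + π j ≤ 1 := by
      rw [← hπsum]
      have : ({0, j} : Finset (Fin m)).sum π ≤ Finset.univ.sum π :=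
        Finset.sum_le_sum_of_subset_of_nonneg (Finset.subset_univ _)
          (fun i _ _ => hπ0 i)
      rwa [Finset.sum_pair h0j] at this
    have hπj : π j ≤ 1 - c := by linarith
    -- from hpp0: p * (ξ*(1-c)) ≤ (1-p) * ((c-ξ)/m)
    have hA : (0:ℝ) < (c - ξ) / m := by
      have : (0:ℝ) < c - ξ := by linarith
      positivity
    have hB : (0:ℝ) < ξ * (1 - c) := by nlinarith
    have hkey : p * (ξ * (1 - c)) ≤ (1 - p) * ((c - ξ) / m) := by
      have hAB : (0:ℝ) < (c - ξ) / m + ξ * (1 - c) := by linarith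
      rw [le_div_iff₀ hAB] at hpp0
      nlinarith
    -- goal: ξ * (p * π j + (1-p)/m) ≤ (1-p)/m * π 0
    have h1 : ξ * (p * π j) ≤ p * (ξ * (1 - c)) := by
      nlinarith [mul_le_mul_of_nonneg_left hπj (mul_nonneg hξ.le hp.le)]
    have h2 : (1 - p) * ((c - ξ) / m) + ξ * ((1 - p) / m) = ((1 - p) / m) * c := by
      field_simp; ring
    nlinarith [mul_le_mul_of_nonneg_left hπc (le_of_lt hqpos)]
end

section
/- (Theorem 2, necessity) Suppose 0 < ξ < c < 1, 0 < p < 1, and for every probability vector (π_1,...,π_m) with π_1 ≥ c one has (pδ_{1j} + (1-p)/m)π_1/(pπ_j + (1-p)/m) ≥ ξ for all j. Then p ≤ p_0 = ((c−ξ)/m)/((c−ξ)/m + ξ(1−c)). -/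
/-- Theorem 2 (necessity): if for every probability vector `π` with `π 0 ≥ c` the
revealing probability is at least `ξ` for all `j`, then
`p ≤ p₀ = ((c-ξ)/m)/((c-ξ)/m + ξ(1-c))`. -/
theorem p_le_p0_of_revealing_ge_xi
    (m : ℕ) (hm : 2 ≤ m) [NeZero m] (ξ c p : ℝ)
    (hξ : 0 < ξ) (hξc : ξ < c) (hc : c < 1)
    (hp : 0 < p) (hp1 : p < 1)
    (hpriv : ∀ π : Fin m → ℝ, (∀ i, 0 ≤ π i) → ∑ i, π i = 1 → c ≤ π 0 →
      ∀ j : Fin m,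
        ξ ≤ (p * (if (0 : Fin m) = j then (1 : ℝ) else 0) + (1 - p) / m) * π 0
              / (p * π j + (1 - p) / m)) :
    p ≤ ((c - ξ) / m) / ((c - ξ) / m + ξ * (1 - c)) := by
  have hm1 : (1 : ℕ) < m := hm
  set j1 : Fin m := ⟨1, hm1⟩ with hj1
  have hmpos : (0 : ℝ) < m := by positivity
  have h01 : (0 : Fin m) ≠ j1 := by
    intro h
    have := congrArg Fin.val h
    simp [hj1, Fin.val_zero] at this
  set π : Fin m → ℝ := fun i => if i = 0 then c else if i = j1 then 1 - c else 0 with hπ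
  have hnn : ∀ i, 0 ≤ π i := by
    intro i
    simp only [hπ]
    split
    · linarith
    · split
      · linarith
      · exact le_rfl
  have hsum : ∑ i, π i = 1 := by
    have : π = fun i => (if i = 0 then c else 0) + (if i = j1 then 1 - c else 0) := by
      funext i
      simp only [hπ]
      by_cases h0 : i = 0
      · subst h0
        simp [h01]
      · simp [h0]
    rw [this, Finset.sum_add_distrib]
    simp
  have hc0 : c ≤ π 0 := by simp [hπ]
  have key := hpriv π hnn hsum hc0 j1
  have hπ0 : π 0 = c := by simp [hπ]
  have hπ1 : π j1 = 1 - c := by simp [hπ, Ne.symm h01]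
  rw [if_neg h01, hπ0, hπ1] at key
  have hden : 0 < p * (1 - c) + (1 - p) / m := by
    have h1 : 0 < (1 - p) / (m : ℝ) := div_pos (by linarith) hmpos
    nlinarith
  rw [le_div_iff₀ hden] at key
  -- key : ξ * (p * (1-c) + (1-p)/m) ≤ (p*0 + (1-p)/m) * c
  have hD : 0 < (c - ξ) / m + ξ * (1 - c) := by
    have h1 : 0 < (c - ξ) / (m : ℝ) := div_pos (by linarith) hmpos
    nlinarith
  rw [le_div_iff₀ hD]
  have e : p * ((c - ξ) / m + ξ * (1 - c))
      = p * ((c - ξ) * (m : ℝ)⁻¹) + ξ * p * (1 - c) := by ring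
  rw [e]
  have e2 : ξ * (p * (1 - c) + (1 - p) / m) = ξ * p * (1 - c) + ξ * ((1 - p) * (m : ℝ)⁻¹) := by
    ring
  have e3 : (p * 0 + (1 - p) / m) * c = (1 - p) * (m : ℝ)⁻¹ * c := by ring
  rw [e2, e3] at key
  have egoal : (c - ξ) / m = p * ((c - ξ) * (m : ℝ)⁻¹) + (1 - p) * ((c - ξ) * (m : ℝ)⁻¹) := by
    ring
  rw [egoal]
  nlinarith [key]
end

section
/- For m = 2 and 0 < ξ < 1, the bound of Theorem 1 specializes to p_0 = 2ξ/(2ξ + (1−ξ)²), and the condition α ≤ ξ for all (π_1, π_2) with π_1 + π_2 = 1 holds iff p ≤ p_0. -/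
/-- Dichotomous case (`m = 2`) of Theorem 1: `p₀` specializes to `2ξ/(2ξ + (1-ξ)²)`,
and `α ≤ ξ` for all probability vectors `(π₁, π₂)` iff `p ≤ p₀`. -/
theorem theorem1_dichotomous
    (ξ p : ℝ) (hξ : 0 < ξ) (hξ1 : ξ < 1) (hp : 0 < p) (hp1 : p < 1) :
    2 * ξ / (2 * ξ + (1 - ξ) ^ 2) = 1 / (1 + (2 / ξ) * ((1 - ξ) / 2) ^ 2) ∧
    ((∀ π1 π2 : ℝ, 0 ≤ π1 → 0 ≤ π2 → π1 + π2 = 1 →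
        max (π1 * (1 - π1) / (π1 + (1 - p) / (2 * p)))
            (π2 * (1 - π2) / (π2 + (1 - p) / (2 * p))) ≤ ξ) ↔
      p ≤ 2 * ξ / (2 * ξ + (1 - ξ) ^ 2)) := by
  have hden : 0 < 2 * ξ + (1 - ξ) ^ 2 := by positivity
  have hc : 0 < (1 - p) / (2 * p) := div_pos (by linarith) (by linarith)
  refine ⟨by rw [div_eq_div_iff hden.ne' (by positivity)]; field_simp, ?_, ?_⟩
  · intro h
    have h1 := le_trans (le_max_left _ _)
      (h ((1 - ξ) / 2) ((1 + ξ) / 2) (by linarith) (by linarith) (by ring))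
    rw [div_le_iff₀ (by linarith)] at h1
    have h3 := mul_le_mul_of_nonneg_right h1 (by linarith : (0:ℝ) ≤ 2 * p)
    have h4 : ξ * ((1 - ξ) / 2 + (1 - p) / (2 * p)) * (2 * p)
        = ξ * (1 - ξ) * p + ξ * (1 - p) := by field_simp
    rw [h4] at h3
    rw [le_div_iff₀ hden]
    nlinarith [h3]
  · intro hple π1 π2 h1 h2 h12
    have key : p * (1 - ξ) ^ 2 ≤ 2 * ξ * (1 - p) := by
      have := (le_div_iff₀ hden).mp hple
      nlinarith [this]
    have hsq : ((1 - ξ) / 2) ^ 2 ≤ ξ * ((1 - p) / (2 * p)) := by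
      rw [show ξ * ((1 - p) / (2 * p)) = ξ * (1 - p) / (2 * p) by ring,
        le_div_iff₀ (by linarith : (0:ℝ) < 2 * p)]
      nlinarith [key]
    have main : ∀ π : ℝ, 0 ≤ π → π * (1 - π) / (π + (1 - p) / (2 * p)) ≤ ξ := by
      intro π hπ
      rw [div_le_iff₀ (by linarith)]
      nlinarith [hsq, sq_nonneg (π - (1 - ξ) / 2)]
    exact max_le (main π1 h1) (main π2 h2)
end
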